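/- arXiv:2404.11923 — 3 statements merged into one kernel-verified Lean document; each statement's English description precedes it below -/
import Mathlib

section
/- Covering Lemma: Let (X,S) and (Y,T) be transformation semigroups with S acting faithfully on X, and let (θ,φ) : (X,S) → (Y,T) be a surjective relational morphism. Then there exist a finite set Z with |Z| = max_{y∈Y} |θ⁻¹(y)|, a transformation semigroup (Z,U), and an injective relational morphism (ψ,μ) from (X,S) into the wreath product (Y,T) ≀ (Z,U); that is, a cascade product over (Y,T) and (Z,U) emulates (X,S). -/
/-- **Covering Lemma.**  Let `(X,S)` and `(Y,T)` be transformation semigroups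
(with `S` a set of total transformations of the finite nonempty set `X` closed
under composition, acting faithfully — here transformations are genuine
functions, so faithfulness is automatic), and let `(θ,φ)` be a surjective
relational morphism `(X,S) ↠ (Y,T)`.  Then there is a finite set
`Z = Fin m` with `m = max_{y ∈ Y} |θ⁻¹(y)|`, a transformation semigroup
`(Z,U)`, and an injective relational morphism `(ψ,μ)` from `(X,S)` into the
wreath product `(Y,T) ≀ (Z,U)`; i.e. a cascade product over `(Y,T)` and
`(Z,U)` emulates `(X,S)`. -/
theorem covering_lemma
    {X Y : Type} [Fintype X] [Fintype Y] [Nonempty X] [Nonempty Y]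
    (S : Set (X → X)) (T : Set (Y → Y))
    (hSclosed : ∀ s ∈ S, ∀ s' ∈ S, (fun x => s' (s x)) ∈ S)
    (hTclosed : ∀ t ∈ T, ∀ t' ∈ T, (fun y => t' (t y)) ∈ T)
    (θ : X → Set Y) (φ : (X → X) → Set (Y → Y))
    -- fully defined
    (hθne : ∀ x, (θ x).Nonempty)
    (hφne : ∀ s ∈ S, (φ s).Nonempty)
    (hφT : ∀ s ∈ S, φ s ⊆ T)
    -- compatibility of actions: θ(x)·φ(s) ⊆ θ(x·s)
    (hcompat : ∀ x, ∀ s ∈ S, ∀ y ∈ θ x, ∀ t ∈ φ s, t y ∈ θ (s x))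
    -- relational morphism of semigroups: φ(s)·φ(s') ⊆ φ(s·s')
    (hφmul : ∀ s ∈ S, ∀ s' ∈ S, ∀ t ∈ φ s, ∀ t' ∈ φ s',
      (fun y => t' (t y)) ∈ φ (fun x => s' (s x)))
    -- surjectivity
    (hθsurj : ∀ y : Y, ∃ x : X, y ∈ θ x)
    (hφsurj : ∀ t ∈ T, ∃ s ∈ S, t ∈ φ s) :
    ∃ m : ℕ,
      -- |Z| = max_{y ∈ Y} |θ⁻¹(y)|, where Z = Fin m
      m = Finset.univ.sup (fun y : Y => Nat.card {x : X // y ∈ θ x}) ∧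
      ∃ U : Set (Fin m → Fin m),
        -- (Z,U) is a transformation semigroup
        (∀ u ∈ U, ∀ u' ∈ U, (fun z => u' (u z)) ∈ U) ∧
        ∃ (ψ : X → Set (Y × Fin m))
          (μ : (X → X) → Set ((Y → Y) × (Y → Fin m → Fin m))),
          -- (ψ,μ) is fully defined
          (∀ x, (ψ x).Nonempty) ∧
          (∀ s ∈ S, (μ s).Nonempty) ∧
          -- the lifted transformations are cascade transformations of (Y,T) ≀ (Z,U)
          (∀ s ∈ S, ∀ p ∈ μ s, p.1 ∈ T ∧ ∀ y, p.2 y ∈ U) ∧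
          -- compatibility of actions with the cascade action (y,z)·(t,d) = (y·t, z·d(y))
          (∀ x, ∀ s ∈ S, ∀ q ∈ ψ x, ∀ p ∈ μ s,
            (p.1 q.1, p.2 q.1 q.2) ∈ ψ (s x)) ∧
          -- μ is a relational morphism of semigroups w.r.t. the wreath product
          -- multiplication (t,d)·(t',d') = (t·t', y ↦ d(y)·d'(y·t))
          (∀ s ∈ S, ∀ s' ∈ S, ∀ p ∈ μ s, ∀ p' ∈ μ s',
            ((fun y => p'.1 (p.1 y)), (fun y z => p'.2 (p.1 y) (p.2 y z))) ∈
              μ (fun x => s' (s x))) ∧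
          -- injectivity on states
          (∀ x₁ x₂ : X, (ψ x₁ ∩ ψ x₂).Nonempty → x₁ = x₂) ∧
          -- injectivity on transformations
          (∀ s₁ ∈ S, ∀ s₂ ∈ S, (μ s₁ ∩ μ s₂).Nonempty → s₁ = s₂) := by
  classical
  set m := Finset.univ.sup (fun y : Y => Nat.card {x : X // y ∈ θ x}) with hm
  have hcard : ∀ y : Y, Fintype.card {x : X // y ∈ θ x} ≤ m := by
    intro y
    rw [hm, ← Nat.card_eq_fintype_card]
    exact Finset.le_sup (f := fun y : Y => Nat.card {x : X // y ∈ θ x})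
      (Finset.mem_univ y)
  set ι : (y : Y) → {x : X // y ∈ θ x} → Fin m :=
    fun y p => Fin.castLE (hcard y) (Fintype.equivFin _ p) with hιdef
  have hι : ∀ y, Function.Injective (ι y) := by
    intro y a b hab
    exact (Fintype.equivFin _).injective (Fin.castLE_injective (hcard y) hab)
  refine ⟨m, rfl, Set.univ, fun _ _ _ _ => Set.mem_univ _,
    fun x => {q : Y × Fin m | ∃ h : q.1 ∈ θ x, q.2 = ι q.1 ⟨x, h⟩},
    fun s => {p : (Y → Y) × (Y → Fin m → Fin m) | p.1 ∈ φ s ∧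
      ∀ (y : Y) (x : X) (h : y ∈ θ x),
        ∃ h' : p.1 y ∈ θ (s x), p.2 y (ι y ⟨x, h⟩) = ι (p.1 y) ⟨s x, h'⟩},
    ?_, ?_, ?_, ?_, ?_, ?_, ?_⟩
  · -- ψ nonempty
    intro x
    obtain ⟨y, hy⟩ := hθne x
    exact ⟨(y, ι y ⟨x, hy⟩), hy, rfl⟩
  · -- μ nonempty
    intro s hs
    obtain ⟨t, ht⟩ := hφne s hs
    refine ⟨⟨t, fun y z =>
      if h : ∃ x : X, ∃ hx : y ∈ θ x, ι y ⟨x, hx⟩ = z then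
        ι (t y) ⟨s h.choose, hcompat h.choose s hs y h.choose_spec.choose t ht⟩
      else z⟩, ht, ?_⟩
    intro y x hx
    refine ⟨hcompat x s hs y hx t ht, ?_⟩
    have hex : ∃ x' : X, ∃ hx' : y ∈ θ x', ι y ⟨x', hx'⟩ = ι y ⟨x, hx⟩ :=
      ⟨x, hx, rfl⟩
    simp only [dif_pos hex]
    have hxeq : hex.choose = x :=
      congrArg Subtype.val (hι y hex.choose_spec.choose_spec)
    congr 1
    exact Subtype.ext (congrArg s hxeq)
  · -- cascade transformations
    intro s hs p hp
    exact ⟨hφT s hs hp.1, fun _ => Set.mem_univ _⟩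
  · -- compatibility
    intro x s hs q hq p hp
    obtain ⟨h, hq2⟩ := hq
    obtain ⟨h', heq⟩ := hp.2 q.1 x h
    exact ⟨h', by rw [hq2, heq]⟩
  · -- multiplicativity
    intro s hs s' hs' p hp p' hp'
    refine ⟨hφmul s hs s' hs' p.1 hp.1 p'.1 hp'.1, ?_⟩
    intro y x h
    obtain ⟨h1, e1⟩ := hp.2 y x h
    obtain ⟨h2, e2⟩ := hp'.2 (p.1 y) (s x) h1
    exact ⟨h2, by simp only [e1, e2]⟩
  · -- injectivity on states
    intro x₁ x₂ ⟨q, hq1, hq2⟩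
    obtain ⟨h1, e1⟩ := hq1
    obtain ⟨h2, e2⟩ := hq2
    have : ι q.1 ⟨x₁, h1⟩ = ι q.1 ⟨x₂, h2⟩ := by rw [← e1, ← e2]
    exact congrArg Subtype.val (hι q.1 this)
  · -- injectivity on transformations
    intro s₁ hs₁ s₂ hs₂ ⟨p, hp1, hp2⟩
    funext x
    obtain ⟨y, hy⟩ := hθne x
    obtain ⟨h1, e1⟩ := hp1.2 y x hy
    obtain ⟨h2, e2⟩ := hp2.2 y x hy
    have : ι (p.1 y) ⟨s₁ x, h1⟩ = ι (p.1 y) ⟨s₂ x, h2⟩ := by rw [← e1, ← e2]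
    exact congrArg Subtype.val (hι (p.1 y) this)
end

section
/- The lifts multiply compatibly (the labelling functions cancel out in the middle): for s, s' ∈ S, t ∈ φ(s), t' ∈ φ(s'), and any y ∈ Y, applying d_{s,t}(y) and then d_{s',t'}(y·t) agrees with d_{s·s', t·t'}(y) on the set w_y(θ⁻¹(y)); consequently μ(s)·μ(s') ⊆ μ(s·s') under the wreath product multiplication (t,d)·(t',d') = (t·t', y ↦ d(y)·d'(y·t)). -/
/-- The lifts multiply compatibly (the labelling functions cancel out in the
middle): for `s, s' ∈ S`, `t ∈ φ(s)`, `t' ∈ φ(s')` and any `y ∈ Y`, applying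
`d_{s,t}(y)` and then `d_{s',t'}(y·t)` agrees with `d_{s·s', t·t'}(y)` on the
set `w_y(θ⁻¹(y))`; consequently `μ(s)·μ(s') ⊆ μ(s·s')` under the wreath
product multiplication `(t,d)·(t',d') = (t·t', y ↦ d(y)·d'(y·t))`. -/
theorem lifts_multiply_compatibly
    {X Y Z : Type}
    (S : Set (X → X)) (T : Set (Y → Y))
    (hSclosed : ∀ s ∈ S, ∀ s' ∈ S, (fun x => s' (s x)) ∈ S)
    (θ : X → Set Y) (φ : (X → X) → Set (Y → Y))
    (hθne : ∀ x, (θ x).Nonempty)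
    (hφne : ∀ s ∈ S, (φ s).Nonempty)
    (hφT : ∀ s ∈ S, φ s ⊆ T)
    (hcompat : ∀ x, ∀ s ∈ S, ∀ y ∈ θ x, ∀ t ∈ φ s, t y ∈ θ (s x))
    (hφmul : ∀ s ∈ S, ∀ s' ∈ S, ∀ t ∈ φ s, ∀ t' ∈ φ s',
      (fun y => t' (t y)) ∈ φ (fun x => s' (s x)))
    -- labelling: w_y injective on θ⁻¹(y)
    (w : Y → X → Z)
    (hwinj : ∀ y, ∀ x₁, y ∈ θ x₁ → ∀ x₂, y ∈ θ x₂ → w y x₁ = w y x₂ → x₁ = x₂)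
    -- the dependency function d_{s,t}(y) agrees with z ↦ w_{y·t}((w_y⁻¹(z))·s)
    -- on w_y(θ⁻¹(y))
    (d : (X → X) → (Y → Y) → Y → Z → Z)
    (hd : ∀ s ∈ S, ∀ t ∈ φ s, ∀ y, ∀ x, y ∈ θ x →
      d s t y (w y x) = w (t y) (s x))
    -- μ(s) = {(t, d) : t ∈ φ(s), d agrees with the dependency functions of s}
    (μ : (X → X) → Set ((Y → Y) × (Y → Z → Z)))
    (hμ : ∀ s, μ s = {p : (Y → Y) × (Y → Z → Z) | p.1 ∈ φ s ∧
      ∀ y, ∀ x, y ∈ θ x → p.2 y (w y x) = w (p.1 y) (s x)}) :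
    -- applying d_{s,t}(y) then d_{s',t'}(y·t) agrees with d_{s·s',t·t'}(y)
    -- on w_y(θ⁻¹(y))
    (∀ s ∈ S, ∀ s' ∈ S, ∀ t ∈ φ s, ∀ t' ∈ φ s', ∀ y, ∀ x, y ∈ θ x →
      d s' t' (t y) (d s t y (w y x)) =
        d (fun x => s' (s x)) (fun y => t' (t y)) y (w y x)) ∧
    -- consequently μ(s)·μ(s') ⊆ μ(s·s')
    (∀ s ∈ S, ∀ s' ∈ S, ∀ p ∈ μ s, ∀ p' ∈ μ s',
      ((fun y => p'.1 (p.1 y)), (fun y z => p'.2 (p.1 y) (p.2 y z))) ∈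
        μ (fun x => s' (s x))) := by
  constructor
  · intro s hs s' hs' t ht t' ht' y x hx
    rw [hd s hs t ht y x hx,
        hd s' hs' t' ht' (t y) (s x) (hcompat x s hs y hx t ht),
        hd _ (hSclosed s hs s' hs') _ (hφmul s hs s' hs' t ht t' ht') y x hx]
  · intro s hs s' hs' p hp p' hp'
    rw [hμ] at hp hp' ⊢
    obtain ⟨hp1, hp2⟩ := hp
    obtain ⟨hp'1, hp'2⟩ := hp'
    refine ⟨hφmul s hs s' hs' p.1 hp1 p'.1 hp'1, fun y x hx => ?_⟩
    show p'.2 (p.1 y) (p.2 y (w y x)) = w (p'.1 (p.1 y)) (s' (s x))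
    rw [hp2 y x hx, hp'2 (p.1 y) (s x) (hcompat x s hs y hx p.1 hp1)]
end

section
/- The n(n−1) method yields compatible state and transformation relations: let X = {1,…,n} with n ≥ 2, let S be a semigroup of total functions X → X, let θ(x) = X \ {x}, and let φ(s) = {s} if s is a permutation of X and φ(s) = {c_j : j ∉ image(s)} if s is not a permutation, where c_j denotes the constant map with image {j}. Then θ(x) ≠ ∅ and φ(s) ≠ ∅ for all x ∈ X, s ∈ S, and θ(x)·φ(s) ⊆ θ(x·s) for all x ∈ X, s ∈ S; that is, if y ≠ x and t ∈ φ(s), then y·t ≠ x·s. -/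
/-- The `n(n−1)` method yields compatible state and transformation relations:
let `X = Fin n` with `n ≥ 2`, let `S` be a semigroup of total functions
`X → X`, let `θ(x) = X \ {x}`, and let `φ(s) = {s}` if `s` is a permutation
of `X` and `φ(s) = {c_j : j ∉ image(s)}` if `s` is not a permutation, where
`c_j` denotes the constant map with image `{j}`.  Then `θ(x) ≠ ∅` and
`φ(s) ≠ ∅` for all `x ∈ X, s ∈ S`, and `θ(x)·φ(s) ⊆ θ(x·s)` for all
`x ∈ X, s ∈ S`; that is, if `y ≠ x` and `t ∈ φ(s)`, then `y·t ≠ x·s`. -/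
theorem n_times_n_minus_one_method
    (n : ℕ) (hn : 2 ≤ n)
    (S : Set (Fin n → Fin n))
    (hSclosed : ∀ s ∈ S, ∀ s' ∈ S, (fun x => s' (s x)) ∈ S)
    (θ : Fin n → Set (Fin n))
    (hθ : ∀ x, θ x = {y : Fin n | y ≠ x})
    (φ : (Fin n → Fin n) → Set (Fin n → Fin n))
    (hφ : ∀ s, φ s =
      {t : Fin n → Fin n |
        (Function.Bijective s ∧ t = s) ∨
        (¬ Function.Bijective s ∧ ∃ j : Fin n, j ∉ Set.range s ∧ t = fun _ => j)}) :
    (∀ x, (θ x).Nonempty) ∧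
    (∀ s ∈ S, (φ s).Nonempty) ∧
    (∀ x, ∀ s ∈ S, ∀ y ∈ θ x, ∀ t ∈ φ s, t y ∈ θ (s x)) := by
  refine ⟨?_, ?_, ?_⟩
  · intro x
    have : Nontrivial (Fin n) := Fin.nontrivial_iff_two_le.mpr hn
    obtain ⟨y, hy⟩ := exists_ne x
    exact ⟨y, by rw [hθ]; exact hy⟩
  · intro s _
    rw [hφ]
    by_cases hb : Function.Bijective s
    · exact ⟨s, Or.inl ⟨hb, rfl⟩⟩
    · have hsurj : ¬ Function.Surjective s := fun h =>
        hb (Finite.injective_iff_bijective.mp ((Finite.injective_iff_surjective).mpr h))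
      obtain ⟨j, hj⟩ := not_forall.mp hsurj
      exact ⟨fun _ => j, Or.inr ⟨hb, j, by simpa [Set.range] using hj, rfl⟩⟩
  · intro x s _ y hy t ht
    rw [hθ] at hy ⊢
    rw [hφ] at ht
    rcases ht with ⟨hb, rfl⟩ | ⟨_, j, hj, rfl⟩
    · exact fun h => hy (hb.injective h)
    · exact fun h => hj ⟨x, h.symm⟩
end
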